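/- For every b ∈ (0,1), the integral of (1/(1-x^2)) * log(1 - b^2(1-x^2)) over x in (0,1), multiplied by -1/π, equals (arcsin b)^2 / π. -/

import Mathlib

open Real MeasureTheory

-- Inner integral in t : antiderivative of -2t/(1 - t²(1-x²))
lemma L1 (b x : ℝ) (hb : b ∈ Set.Ioo (0:ℝ) 1) (hx : x ∈ Set.Ioo (0:ℝ) 1) :
    ∫ t in (0:ℝ)..b, -2*t/(1 - t^2*(1-x^2))
      = (1/(1-x^2)) * Real.log (1 - b^2*(1-x^2)) := by
  obtain ⟨hb0, hb1⟩ := hb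
  obtain ⟨hx0, hx1⟩ := hx
  have hc0 : 0 < 1 - x^2 := by nlinarith
  have hc1 : 1 - x^2 ≤ 1 := by nlinarith
  have hpos : ∀ t ∈ Set.uIcc (0:ℝ) b, 0 < 1 - t^2*(1-x^2) := by
    intro t ht
    rw [Set.uIcc_of_le hb0.le] at ht
    nlinarith [ht.1, ht.2, mul_self_le_mul_self ht.1 ht.2]
  have hderiv : ∀ t ∈ Set.uIcc (0:ℝ) b,
      HasDerivAt (fun t : ℝ => (1/(1-x^2)) * Real.log (1 - t^2*(1-x^2)))
        (-2*t/(1 - t^2*(1-x^2))) t := by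
    intro t ht
    have hne : 1 - t^2*(1-x^2) ≠ 0 := (hpos t ht).ne'
    have h1 : HasDerivAt (fun t : ℝ => 1 - t^2*(1-x^2)) (-(2*t*(1-x^2))) t := by
      simpa using ((hasDerivAt_pow 2 t).mul_const (1-x^2)).const_sub 1
    have h2 := (Real.hasDerivAt_log hne).comp t h1
    have h3 := h2.const_mul (1/(1-x^2))
    refine HasDerivAt.congr_deriv h3 ?_
    field_simp
  have hint : IntervalIntegrable (fun t : ℝ => -2*t/(1 - t^2*(1-x^2))) volume 0 b := by
    apply ContinuousOn.intervalIntegrable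
    apply ContinuousOn.div
    · exact (continuous_const.mul continuous_id).continuousOn
    · exact (continuous_const.sub ((continuous_pow 2).mul continuous_const)).continuousOn
    · intro t ht; exact (hpos t ht).ne'
  rw [intervalIntegral.integral_eq_sub_of_hasDerivAt hderiv hint]
  simp

-- Inner integral in x : antiderivative via arctan
lemma L2 (t : ℝ) (ht : t ∈ Set.Ioo (0:ℝ) 1) :
    ∫ x in (0:ℝ)..1, -2*t/(1 - t^2*(1-x^2))
      = -2 * Real.arcsin t / Real.sqrt (1-t^2) := by
  obtain ⟨ht0, ht1⟩ := ht
  have h1t : 0 < 1 - t^2 := by nlinarith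
  set s := Real.sqrt (1 - t^2) with hs_def
  have hs : 0 < s := Real.sqrt_pos.mpr h1t
  have hs2 : s^2 = 1 - t^2 := Real.sq_sqrt h1t.le
  have hd : ∀ x : ℝ, 1 - t^2*(1-x^2) = s^2 + t^2*x^2 := by
    intro x; rw [hs2]; ring
  have hdpos : ∀ x : ℝ, 0 < s^2 + t^2*x^2 := by
    intro x; positivity
  have hderiv : ∀ x ∈ Set.uIcc (0:ℝ) 1,
      HasDerivAt (fun x : ℝ => (-2/s) * Real.arctan (t/s * x))
        (-2*t/(1 - t^2*(1-x^2))) x := by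
    intro x _
    have h1 : HasDerivAt (fun x : ℝ => t/s * x) (t/s) x := by
      simpa using (hasDerivAt_id x).const_mul (t/s)
    have h2 := (Real.hasDerivAt_arctan (t/s * x)).comp x h1
    have h3 := h2.const_mul (-2/s)
    refine HasDerivAt.congr_deriv h3 ?_
    rw [hd x]
    have h4 : 1 + (t/s*x)^2 ≠ 0 := by positivity
    field_simp
  have hint : IntervalIntegrable (fun x : ℝ => -2*t/(1 - t^2*(1-x^2))) volume 0 1 := by
    apply ContinuousOn.intervalIntegrable
    apply ContinuousOn.div
    · exact continuousOn_const
    · exact (continuous_const.sub (continuous_const.mul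
        (continuous_const.sub (continuous_pow 2)))).continuousOn
    · intro x _; rw [hd x]; exact (hdpos x).ne'
  rw [intervalIntegral.integral_eq_sub_of_hasDerivAt hderiv hint]
  have harcsin : Real.arcsin t = Real.arctan (t / s) :=
    Real.arcsin_eq_arctan ⟨by linarith, ht1⟩
  rw [mul_one, mul_zero, Real.arctan_zero, mul_zero, sub_zero, ← harcsin]
  ring

-- Outer integral
lemma L3 (b : ℝ) (hb : b ∈ Set.Ioo (0:ℝ) 1) :
    ∫ t in (0:ℝ)..b, -2 * Real.arcsin t / Real.sqrt (1-t^2)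
      = -(Real.arcsin b)^2 := by
  obtain ⟨hb0, hb1⟩ := hb
  have hderiv : ∀ t ∈ Set.uIcc (0:ℝ) b,
      HasDerivAt (fun t : ℝ => -(Real.arcsin t)^2)
        (-2 * Real.arcsin t / Real.sqrt (1-t^2)) t := by
    intro t ht
    rw [Set.uIcc_of_le hb0.le] at ht
    have hne1 : t ≠ -1 := by linarith [ht.1]
    have hne2 : t ≠ 1 := by linarith [ht.2]
    have h1 := ((Real.hasDerivAt_arcsin hne1 hne2).pow 2).neg
    refine HasDerivAt.congr_deriv h1 ?_
    push_cast
    ring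
  have hint : IntervalIntegrable (fun t : ℝ => -2 * Real.arcsin t / Real.sqrt (1-t^2))
      volume 0 b := by
    apply ContinuousOn.intervalIntegrable
    apply ContinuousOn.div
    · exact (continuous_const.mul Real.continuous_arcsin).continuousOn
    · exact (Real.continuous_sqrt.comp (continuous_const.sub (continuous_pow 2))).continuousOn
    · intro t ht
      rw [Set.uIcc_of_le hb0.le] at ht
      have : 0 < 1 - t^2 := by nlinarith [ht.1, ht.2, mul_self_le_mul_self ht.1 ht.2]
      exact (Real.sqrt_pos.mpr this).ne'
  rw [intervalIntegral.integral_eq_sub_of_hasDerivAt hderiv hint]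
  simp

theorem stmt1 (b : ℝ) (hb : b ∈ Set.Ioo (0:ℝ) 1) :
    -(1/π) * ∫ x in Set.Ioo (0:ℝ) 1,
        (1/(1 - x^2)) * Real.log (1 - b^2*(1 - x^2)) = (Real.arcsin b)^2 / π := by
  obtain ⟨hb0, hb1⟩ := hb
  have key : ∫ x in Set.Ioo (0:ℝ) 1,
      (1/(1 - x^2)) * Real.log (1 - b^2*(1 - x^2)) = -(Real.arcsin b)^2 := by
    have hA : Set.EqOn (fun x : ℝ => (1/(1 - x^2)) * Real.log (1 - b^2*(1 - x^2)))
        (fun x : ℝ => ∫ t in Set.Ioo (0:ℝ) b, -2*t/(1 - t^2*(1-x^2)))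
        (Set.Ioo (0:ℝ) 1) := by
      intro x hx
      simp only
      rw [← MeasureTheory.integral_Ioc_eq_integral_Ioo,
        ← intervalIntegral.integral_of_le hb0.le, L1 b x ⟨hb0, hb1⟩ hx]
    rw [MeasureTheory.setIntegral_congr_fun measurableSet_Ioo hA]
    have hint : Integrable (Function.uncurry fun x t : ℝ => -2*t/(1 - t^2*(1-x^2)))
        ((volume.restrict (Set.Ioo (0:ℝ) 1)).prod (volume.restrict (Set.Ioo (0:ℝ) b))) := by
      rw [MeasureTheory.Measure.prod_restrict]
      have hmeas : MeasurableSet (Set.Ioo (0:ℝ) 1 ×ˢ Set.Ioo (0:ℝ) b) :=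
        measurableSet_Ioo.prod measurableSet_Ioo
      have hdpos : ∀ p ∈ Set.Ioo (0:ℝ) 1 ×ˢ Set.Ioo (0:ℝ) b,
          0 < 1 - p.2^2*(1-p.1^2) := by
        rintro ⟨x, t⟩ ⟨⟨hx0, hx1⟩, ⟨ht0, htb⟩⟩
        simp only at *
        have htb1 : t < 1 := lt_trans htb hb1
        nlinarith [mul_self_le_mul_self ht0.le htb1.le]
      apply MeasureTheory.Integrable.mono'
        (g := fun _ : ℝ × ℝ => 2*b/(1-b^2))
      · refine MeasureTheory.integrableOn_const ?_
        rw [MeasureTheory.Measure.prod_prod]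
        exact (ENNReal.mul_lt_top (by simp) (by simp)).ne
      · apply ContinuousOn.aestronglyMeasurable _ hmeas
        apply ContinuousOn.div
        · exact (continuous_const.mul (continuous_snd)).continuousOn
        · exact (continuous_const.sub ((continuous_snd.pow 2).mul
            (continuous_const.sub (continuous_fst.pow 2)))).continuousOn
        · intro p hp; exact (hdpos p hp).ne'
      · rw [MeasureTheory.ae_restrict_iff' hmeas]
        filter_upwards with p hp
        obtain ⟨⟨hx0, hx1⟩, ⟨ht0, htb⟩⟩ := hp
        have hd := hdpos p ⟨⟨hx0, hx1⟩, ⟨ht0, htb⟩⟩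
        have hb2 : 0 < 1 - b^2 := by nlinarith
        have hdge : 1 - b^2 ≤ 1 - p.2^2*(1-p.1^2) := by
          have : p.2 < 1 := lt_trans htb hb1
          nlinarith [mul_self_le_mul_self ht0.le htb.le]
        rw [Function.uncurry, Real.norm_eq_abs, abs_div, abs_of_pos hd]
        have h1 : |(-2*p.2 : ℝ)| = 2*p.2 := by
          rw [abs_of_nonpos (by linarith)]; ring
        rw [h1, div_le_div_iff₀ hd hb2]
        nlinarith
    have hswap := MeasureTheory.integral_integral_swap hint
    rw [hswap]
    have hB : Set.EqOn
        (fun t : ℝ => ∫ x in Set.Ioo (0:ℝ) 1, -2*t/(1 - t^2*(1-x^2)))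
        (fun t : ℝ => -2 * Real.arcsin t / Real.sqrt (1-t^2))
        (Set.Ioo (0:ℝ) b) := by
      intro t ht
      simp only
      rw [← MeasureTheory.integral_Ioc_eq_integral_Ioo,
        ← intervalIntegral.integral_of_le zero_le_one,
        L2 t ⟨ht.1, lt_trans ht.2 hb1⟩]
    rw [MeasureTheory.setIntegral_congr_fun measurableSet_Ioo hB,
      ← MeasureTheory.integral_Ioc_eq_integral_Ioo,
      ← intervalIntegral.integral_of_le hb0.le,
      L3 b ⟨hb0, hb1⟩]
  rw [key]
  ring
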